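/- Entropy-integral (Dudley chaining) bound on the empirical Rademacher average: for any class F of measurable functions from Z to [0,1] and any S = {z_1,…,z_n} ∈ Zⁿ, R̂_n(F,S) ≤ inf_{α≥0} { 4α + (12/√n) ∫_α^1 √(log N₂(F,ρ,S)) dρ }. -/

import Mathlib

open MeasureTheory Real

namespace RST

variable {Z : Type*}

/-- The empirical `ℓ₂` pseudo-distance on a sample `S = (z_1,…,z_n)`. -/
noncomputable def empDistZ {n : ℕ} (S : Fin n → Z) (f g : Z → ℝ) : ℝ :=
  Real.sqrt ((n : ℝ)⁻¹ * ∑ i, (f (S i) - g (S i)) ^ 2)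

/-- The empirical covering number `N₂(F, ρ, S)` (with respect to `d_S`). -/
noncomputable def coveringNumberZ {n : ℕ} (F : Set (Z → ℝ)) (ρ : ℝ) (S : Fin n → Z) : ℕ :=
  sInf {N : ℕ | ∃ c : Fin N → Z → ℝ, (∀ i, c i ∈ F) ∧ ∀ f ∈ F, ∃ i, empDistZ S f (c i) ≤ ρ}

/-- The empirical Rademacher average `R̂_n(F, S)`. -/
noncomputable def empRadZ {n : ℕ} (F : Set (Z → ℝ)) (S : Fin n → Z) : ℝ :=
  ((2 : ℝ) ^ n)⁻¹ * ∑ σ : Fin n → Bool,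
    sSup ((fun f => (n : ℝ)⁻¹ * ∑ i, (if σ i then (1 : ℝ) else -1) * f (S i)) '' F)

universe u

end RST

namespace RST
open Finset
set_option maxHeartbeats 1000000


open Finset

noncomputable def sg (b : Bool) : ℝ := if b then 1 else -1

lemma sg_abs (b : Bool) : |sg b| = 1 := by cases b <;> simp [sg]

lemma sg_mul_le (b : Bool) (x : ℝ) : sg b * x ≤ |x| := by
  calc sg b * x ≤ |sg b * x| := le_abs_self _
  _ = |x| := by rw [abs_mul, sg_abs, one_mul]

variable {n : ℕ}

/-- Sum over all sign vectors of a single sign is zero. -/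
lemma sum_sg_zero (i : Fin n) : ∑ σ : Fin n → Bool, sg (σ i) = 0 := by
  classical
  have h : ∀ σ : Fin n → Bool, sg (σ i) = ∏ j, (if j = i then sg (σ j) else 1) := by
    intro σ
    rw [Finset.prod_eq_single i (by intro b _ hb; simp [hb]) (by simp)]
    simp
  calc ∑ σ : Fin n → Bool, sg (σ i)
      = ∑ σ : Fin n → Bool, ∏ j, (fun j b => if j = i then sg b else 1) j (σ j) := by
        refine Finset.sum_congr rfl fun σ _ => h σ
    _ = ∏ j, ∑ b : Bool, (fun j b => if j = i then sg b else 1) j b := by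
        rw [Fintype.prod_sum]
    _ = 0 := by
        apply Finset.prod_eq_zero (Finset.mem_univ i)
        simp [sg]

lemma sum_sg_inner_zero (c : Fin n → ℝ) :
    ∑ σ : Fin n → Bool, ∑ i, sg (σ i) * c i = 0 := by
  rw [Finset.sum_comm]
  refine Finset.sum_eq_zero fun i _ => ?_
  rw [← Finset.sum_mul, sum_sg_zero, zero_mul]

lemma card_pi_bool : (Fintype.card (Fin n → Bool) : ℝ) = 2 ^ n := by
  simp [Fintype.card_fun]



/-- Jensen's inequality for `exp` w.r.t. the uniform distribution on sign vectors. -/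
lemma jensen_exp (a : (Fin n → Bool) → ℝ) :
    Real.exp (((2:ℝ)^n)⁻¹ * ∑ σ : Fin n → Bool, a σ) ≤
      ((2:ℝ)^n)⁻¹ * ∑ σ : Fin n → Bool, Real.exp (a σ) := by
  have h2 : (0:ℝ) < 2 ^ n := by positivity
  have hcard : ((Finset.univ : Finset (Fin n → Bool)).card : ℝ) = 2 ^ n := by
    simp [Finset.card_univ, Fintype.card_fun]
  have hw : ∑ _σ : Fin n → Bool, ((2:ℝ)^n)⁻¹ = 1 := by
    rw [Finset.sum_const, nsmul_eq_mul, hcard, mul_inv_cancel₀ (ne_of_gt h2)]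
  have key := Real.geom_mean_le_arith_mean_weighted Finset.univ
    (fun _ => ((2:ℝ)^n)⁻¹) (fun σ => Real.exp (a σ))
    (fun _ _ => by positivity) hw (fun _ _ => (Real.exp_pos _).le)
  calc Real.exp (((2:ℝ)^n)⁻¹ * ∑ σ : Fin n → Bool, a σ)
      = ∏ σ : Fin n → Bool, Real.exp (a σ) ^ (((2:ℝ)^n)⁻¹) := by
        rw [Finset.mul_sum, Real.exp_sum]
        refine Finset.prod_congr rfl fun σ _ => ?_
        rw [Real.rpow_def_of_pos (Real.exp_pos _), Real.log_exp, mul_comm]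
    _ ≤ ∑ σ : Fin n → Bool, ((2:ℝ)^n)⁻¹ * Real.exp (a σ) := key
    _ = ((2:ℝ)^n)⁻¹ * ∑ σ : Fin n → Bool, Real.exp (a σ) := by rw [Finset.mul_sum]

/-- Factorized bound on the Rademacher mgf. -/
lemma sum_exp_inner (y : Fin n → ℝ) :
    ∑ σ : Fin n → Bool, Real.exp (∑ i, sg (σ i) * y i) ≤
      (2:ℝ)^n * Real.exp ((∑ i, (y i)^2) / 2) := by
  classical
  have hfac : ∑ σ : Fin n → Bool, ∏ i, (fun i b => Real.exp (sg b * y i)) i (σ i)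
      = ∏ i, ∑ b : Bool, (fun i b => Real.exp (sg b * y i)) i b :=
    (Fintype.prod_sum (fun i b => Real.exp (sg b * y i))).symm
  calc ∑ σ : Fin n → Bool, Real.exp (∑ i, sg (σ i) * y i)
      = ∑ σ : Fin n → Bool, ∏ i, Real.exp (sg (σ i) * y i) := by
        refine Finset.sum_congr rfl fun σ _ => Real.exp_sum _ _
    _ = ∏ i, ∑ b : Bool, Real.exp (sg b * y i) := hfac
    _ = ∏ i, (2 * Real.cosh (y i)) := by
        refine Finset.prod_congr rfl fun i _ => ?_
        rw [Real.cosh_eq]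
        simp [sg]
        ring
    _ ≤ ∏ i, (2 * Real.exp ((y i)^2 / 2)) := by
        refine Finset.prod_le_prod (fun i _ => by positivity) (fun i _ => ?_)
        have := Real.cosh_le_exp_half_sq (y i)
        nlinarith
    _ = (2:ℝ)^n * Real.exp ((∑ i, (y i)^2) / 2) := by
        rw [Finset.prod_mul_distrib, Finset.prod_const, ← Real.exp_sum]
        simp [Finset.sum_div]

/-- **Massart's finite class lemma** (unnormalized form). -/
lemma massart {ι : Type*} (A : Finset ι) (hA : A.Nonempty) (w : ι → Fin n → ℝ)
    (b : ℝ) (hb : 0 ≤ b) (hw : ∀ a ∈ A, Real.sqrt (∑ i, (w a i)^2) ≤ b) :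
    ((2:ℝ)^n)⁻¹ * ∑ σ : Fin n → Bool, A.sup' hA (fun a => ∑ i, sg (σ i) * w a i) ≤
      b * Real.sqrt (2 * Real.log A.card) := by
  classical
  set X : (Fin n → Bool) → ℝ := fun σ => A.sup' hA (fun a => ∑ i, sg (σ i) * w a i) with hX
  set E : ℝ := ((2:ℝ)^n)⁻¹ * ∑ σ : Fin n → Bool, X σ with hE
  set L : ℝ := Real.log A.card with hL
  have hL0 : 0 ≤ L := Real.log_nonneg (by exact_mod_cast hA.card_pos)
  have h2 : (0:ℝ) < 2 ^ n := by positivity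
  have key : ∀ lam : ℝ, 0 < lam → E ≤ L / lam + lam * b^2 / 2 := by
    intro lam hlam
    have hsq : ∀ a ∈ A, ∑ i, (lam * w a i)^2 ≤ lam^2 * b^2 := by
      intro a ha
      have h1 : Real.sqrt (∑ i, (w a i)^2) ≤ b := hw a ha
      have h0 : (0:ℝ) ≤ ∑ i, (w a i)^2 := by positivity
      have hsum : ∑ i, (w a i)^2 ≤ b^2 := by
        nlinarith [Real.sq_sqrt h0, Real.sqrt_nonneg (∑ i, (w a i)^2)]
      calc ∑ i, (lam * w a i)^2 = lam^2 * ∑ i, (w a i)^2 := by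
            rw [Finset.mul_sum]; refine Finset.sum_congr rfl fun i _ => by ring
        _ ≤ lam^2 * b^2 := by nlinarith
    have hexp : Real.exp (lam * E) ≤ A.card * Real.exp (lam^2 * b^2 / 2) := by
      have harg : lam * E = ((2:ℝ)^n)⁻¹ * ∑ σ : Fin n → Bool, lam * X σ := by
        rw [hE, Finset.mul_sum, Finset.mul_sum, Finset.mul_sum]
        rw [Finset.sum_congr rfl (fun σ _ => by ring :
          ∀ σ ∈ (Finset.univ : Finset (Fin n → Bool)),
            lam * (((2:ℝ)^n)⁻¹ * X σ) = ((2:ℝ)^n)⁻¹ * (lam * X σ))]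
      have j1 : Real.exp (lam * E) ≤
          ((2:ℝ)^n)⁻¹ * ∑ σ : Fin n → Bool, Real.exp (lam * X σ) := by
        rw [harg]; exact jensen_exp _
      have j2 : ∀ σ : Fin n → Bool,
          Real.exp (lam * X σ) ≤ ∑ a ∈ A, Real.exp (∑ i, sg (σ i) * (lam * w a i)) := by
        intro σ
        obtain ⟨a0, ha0, hmax⟩ := Finset.exists_mem_eq_sup' hA
          (fun a => ∑ i, sg (σ i) * w a i)
        rw [hX]
        simp only []
        rw [hmax]
        have harg2 : Real.exp (lam * ∑ i, sg (σ i) * w a0 i)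
            = Real.exp (∑ i, sg (σ i) * (lam * w a0 i)) := by
          congr 1; rw [Finset.mul_sum]; refine Finset.sum_congr rfl fun i _ => by ring
        rw [harg2]
        exact Finset.single_le_sum
          (f := fun a => Real.exp (∑ i, sg (σ i) * (lam * w a i)))
          (fun a _ => (Real.exp_pos _).le) ha0
      have j3 : ∀ a ∈ A, ∑ σ : Fin n → Bool, Real.exp (∑ i, sg (σ i) * (lam * w a i)) ≤
          (2:ℝ)^n * Real.exp (lam^2 * b^2 / 2) := by
        intro a ha
        calc ∑ σ : Fin n → Bool, Real.exp (∑ i, sg (σ i) * (lam * w a i))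
            ≤ (2:ℝ)^n * Real.exp ((∑ i, (lam * w a i)^2) / 2) := sum_exp_inner _
          _ ≤ (2:ℝ)^n * Real.exp (lam^2 * b^2 / 2) := by
              have := hsq a ha
              exact mul_le_mul_of_nonneg_left (Real.exp_le_exp.2 (by linarith))
                (by positivity)
      calc Real.exp (lam * E)
          ≤ ((2:ℝ)^n)⁻¹ * ∑ σ : Fin n → Bool, Real.exp (lam * X σ) := j1
        _ ≤ ((2:ℝ)^n)⁻¹ * ∑ σ : Fin n → Bool,
              ∑ a ∈ A, Real.exp (∑ i, sg (σ i) * (lam * w a i)) := by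
            gcongr with σ hσ
            exact j2 σ
        _ = ((2:ℝ)^n)⁻¹ * ∑ a ∈ A,
              ∑ σ : Fin n → Bool, Real.exp (∑ i, sg (σ i) * (lam * w a i)) := by
            rw [Finset.sum_comm]
        _ ≤ ((2:ℝ)^n)⁻¹ * ∑ _a ∈ A, (2:ℝ)^n * Real.exp (lam^2 * b^2 / 2) := by
            gcongr with a ha
            exact j3 a ha
        _ = A.card * Real.exp (lam^2 * b^2 / 2) := by
            rw [Finset.sum_const, nsmul_eq_mul]
            field_simp
    have hlog := Real.log_le_log (Real.exp_pos _) hexp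
    rw [Real.log_exp, Real.log_mul (by exact_mod_cast hA.card_pos.ne')
      (Real.exp_ne_zero _), Real.log_exp] at hlog
    have hfin : lam * E ≤ L + lam^2 * b^2 / 2 := by rw [hL]; linarith
    calc E = (lam * E) / lam := by field_simp
      _ ≤ (L + lam^2 * b^2 / 2) / lam := div_le_div_of_nonneg_right hfin hlam.le
      _ = L / lam + lam * b^2 / 2 := by field_simp
  rcases eq_or_lt_of_le hL0 with hL0' | hLpos
  · have hcard : A.card = 1 := by
      have hc1 : (1:ℝ) ≤ A.card := by exact_mod_cast hA.card_pos
      have h1 : (A.card : ℝ) = 1 := by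
        by_contra hne
        have hgt : (1:ℝ) < A.card := lt_of_le_of_ne hc1 (Ne.symm hne)
        have := Real.log_pos hgt
        rw [← hL] at this; linarith
      exact_mod_cast h1
    obtain ⟨a, ha⟩ := Finset.card_eq_one.1 hcard
    have hEe : E = 0 := by
      rw [hE]
      have hXa : ∀ σ : Fin n → Bool, X σ = ∑ i, sg (σ i) * w a i := by
        intro σ
        obtain ⟨a0, ha0, hmax⟩ := Finset.exists_mem_eq_sup' hA
          (fun a' => ∑ i, sg (σ i) * w a' i)
        rw [ha, Finset.mem_singleton] at ha0
        rw [hX]; simp only []; rw [hmax, ha0]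
      rw [Finset.sum_congr rfl (fun σ _ => hXa σ), sum_sg_inner_zero]
      ring
    rw [hEe, ← hL0', mul_zero, Real.sqrt_zero, mul_zero]
  · rcases eq_or_lt_of_le hb with hb0 | hbpos
    · have hE0' : E ≤ 0 := by
        by_contra hpos
        push_neg at hpos
        obtain ⟨lam, hlam, hlt⟩ : ∃ lam : ℝ, 0 < lam ∧ L / lam < E := by
          refine ⟨2 * L / E, by positivity, ?_⟩
          have heq : L / (2 * L / E) = E / 2 := by field_simp
          rw [heq]; linarith
        have hk := key lam hlam
        rw [← hb0] at hk
        simp at hk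
        linarith
      calc E ≤ 0 := hE0'
        _ ≤ b * Real.sqrt (2 * L) := by positivity
    · set s : ℝ := Real.sqrt (2 * L) with hs
      have hspos : 0 < s := Real.sqrt_pos.2 (by linarith)
      have hs2 : s^2 = 2 * L := Real.sq_sqrt (by linarith)
      have hk := key (s / b) (by positivity)
      calc E ≤ L / (s / b) + (s / b) * b^2 / 2 := hk
        _ = b * s := by
            field_simp
            nlinarith [hs2]



noncomputable def nrm (u : Fin n → ℝ) : ℝ := Real.sqrt (∑ i, (u i)^2)

lemma nrm_eq_norm (u : Fin n → ℝ) :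
    nrm u = ‖(WithLp.equiv 2 (Fin n → ℝ)).symm u‖ := by
  rw [EuclideanSpace.norm_eq, nrm]
  congr 1
  refine Finset.sum_congr rfl fun i _ => ?_
  rw [Real.norm_eq_abs, sq_abs]
  rfl

lemma nrm_nonneg (u : Fin n → ℝ) : 0 ≤ nrm u := Real.sqrt_nonneg _

lemma nrm_triangle (u v : Fin n → ℝ) : nrm (u - v) ≤ nrm (u - w) + nrm (w - v) := by
  rw [nrm_eq_norm, nrm_eq_norm, nrm_eq_norm]
  have : (WithLp.equiv 2 (Fin n → ℝ)).symm (u - v) =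
      (WithLp.equiv 2 (Fin n → ℝ)).symm (u - w) + (WithLp.equiv 2 (Fin n → ℝ)).symm (w - v) := by
    show WithLp.toLp 2 (u - v) = WithLp.toLp 2 (u - w) + WithLp.toLp 2 (w - v)
    rw [← WithLp.toLp_add]
    congr 1
    abel
  rw [this]
  exact norm_add_le _ _

lemma inner_le_nrm (x y : Fin n → ℝ) : |∑ i, x i * y i| ≤ nrm x * nrm y := by
  have h := abs_real_inner_le_norm ((WithLp.equiv 2 (Fin n → ℝ)).symm x)
    ((WithLp.equiv 2 (Fin n → ℝ)).symm y)
  rw [← nrm_eq_norm, ← nrm_eq_norm] at h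
  have hinner : (inner ℝ ((WithLp.equiv 2 (Fin n → ℝ)).symm x)
      ((WithLp.equiv 2 (Fin n → ℝ)).symm y) : ℝ) = ∑ i, x i * y i := by
    rw [PiLp.inner_apply]
    refine Finset.sum_congr rfl fun i _ => ?_
    simp [RCLike.inner_apply]
    ring
  rwa [hinner] at h

noncomputable def d2 (n : ℕ) (u v : Fin n → ℝ) : ℝ :=
  Real.sqrt ((n:ℝ)⁻¹ * ∑ i, (u i - v i)^2)

lemma d2_nonneg (u v : Fin n → ℝ) : 0 ≤ d2 n u v := Real.sqrt_nonneg _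

lemma d2_eq (u v : Fin n → ℝ) : d2 n u v = (Real.sqrt n)⁻¹ * nrm (u - v) := by
  rw [d2, nrm, Real.sqrt_mul (by positivity), Real.sqrt_inv]
  congr 2

lemma nrm_sub_eq (u v : Fin n → ℝ) :
    Real.sqrt (∑ i, (u i - v i)^2) = Real.sqrt n * d2 n u v := by
  rcases Nat.eq_zero_or_pos n with h0 | hpos
  · subst h0; simp [d2]
  · rw [d2_eq, ← mul_assoc, mul_inv_cancel₀ (by positivity), one_mul, nrm]
    congr 1

lemma d2_triangle (u v w : Fin n → ℝ) : d2 n u v ≤ d2 n u w + d2 n w v := by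
  rw [d2_eq, d2_eq, d2_eq, ← mul_add]
  exact mul_le_mul_of_nonneg_left (nrm_triangle u v) (by positivity)

lemma d2_comm (u v : Fin n → ℝ) : d2 n u v = d2 n v u := by
  rw [d2, d2]
  congr 2
  refine Finset.sum_congr rfl fun i _ => by ring

/-- Deterministic bound on a normalized signed sum by the empirical distance. -/
lemma inner_sg_le_d2 (hn : 0 < n) (σ : Fin n → Bool) (u v : Fin n → ℝ) :
    (n:ℝ)⁻¹ * ∑ i, sg (σ i) * (u i - v i) ≤ d2 n u v := by
  have h1 : |∑ i, sg (σ i) * (u i - v i)| ≤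
      nrm (fun i => sg (σ i)) * nrm (u - v) := by
    have := inner_le_nrm (fun i => sg (σ i)) (u - v)
    simpa [Pi.sub_apply] using this
  have h2 : nrm (fun i : Fin n => sg (σ i)) = Real.sqrt n := by
    rw [nrm]
    congr 1
    rw [Finset.sum_congr rfl (fun i _ => by
      rw [← sq_abs, sg_abs, one_pow] : ∀ i ∈ Finset.univ, (sg (σ i))^2 = 1)]
    simp
  have hsn : (0:ℝ) < Real.sqrt n := Real.sqrt_pos.2 (by exact_mod_cast hn)
  have hinv : (n:ℝ)⁻¹ * Real.sqrt n = (Real.sqrt n)⁻¹ := by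
    rw [← Real.sqrt_mul_self (by positivity : (0:ℝ) ≤ (n:ℝ))]
    field_simp
    rw [Real.sq_sqrt (Real.sqrt_nonneg _)]
  calc (n:ℝ)⁻¹ * ∑ i, sg (σ i) * (u i - v i)
      ≤ (n:ℝ)⁻¹ * |∑ i, sg (σ i) * (u i - v i)| := by
        have := le_abs_self (∑ i, sg (σ i) * (u i - v i))
        have hn' : (0:ℝ) ≤ (n:ℝ)⁻¹ := by positivity
        exact mul_le_mul_of_nonneg_left this hn'
    _ ≤ (n:ℝ)⁻¹ * (Real.sqrt n * nrm (u - v)) := by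
        rw [h2] at h1
        exact mul_le_mul_of_nonneg_left h1 (by positivity)
    _ = (Real.sqrt n)⁻¹ * nrm (u - v) := by rw [← mul_assoc, hinv]
    _ = d2 n u v := (d2_eq u v).symm

/-- vectors in the unit cube are at empirical distance at most 1. -/
lemma d2_le_one {u v : Fin n → ℝ} (hu : ∀ i, u i ∈ Set.Icc (0:ℝ) 1)
    (hv : ∀ i, v i ∈ Set.Icc (0:ℝ) 1) : d2 n u v ≤ 1 := by
  rw [d2]
  rw [show (1:ℝ) = Real.sqrt 1 by rw [Real.sqrt_one]]
  apply Real.sqrt_le_sqrt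
  have hsum : ∑ i, (u i - v i)^2 ≤ (n:ℝ) := by
    calc ∑ i, (u i - v i)^2 ≤ ∑ _i : Fin n, (1:ℝ) := by
          refine Finset.sum_le_sum fun i _ => ?_
          have h1 := hu i; have h2 := hv i
          simp only [Set.mem_Icc] at h1 h2
          nlinarith
      _ = (n:ℝ) := by simp
  rcases Nat.eq_zero_or_pos n with h0 | hpos
  · subst h0; simp
  · have hn : (0:ℝ) < n := by exact_mod_cast hpos
    have h2 : (n:ℝ)⁻¹ * ∑ i, (u i - v i)^2 ≤ (n:ℝ)⁻¹ * (n:ℝ) :=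
      mul_le_mul_of_nonneg_left hsum (by positivity)
    have h3 : (n:ℝ)⁻¹ * (n:ℝ) = 1 := by field_simp
    linarith

def coverSet (n : ℕ) (V : Set (Fin n → ℝ)) (ρ : ℝ) : Set ℕ :=
  {N | ∃ c : Fin N → Fin n → ℝ, (∀ i, c i ∈ V) ∧ ∀ v ∈ V, ∃ i, d2 n v (c i) ≤ ρ}

noncomputable def covV (n : ℕ) (V : Set (Fin n → ℝ)) (ρ : ℝ) : ℕ := sInf (coverSet n V ρ)

lemma abs_sub_lt_of_floor_div_eq {a b ρ : ℝ} (hρ : 0 < ρ)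
    (h : ⌊a / ρ⌋ = ⌊b / ρ⌋) : |a - b| < ρ := by
  have h1 : (⌊a / ρ⌋ : ℝ) ≤ a / ρ := Int.floor_le _
  have h2 : a / ρ < ⌊a / ρ⌋ + 1 := Int.lt_floor_add_one _
  have h3 : (⌊b / ρ⌋ : ℝ) ≤ b / ρ := Int.floor_le _
  have h4 : b / ρ < ⌊b / ρ⌋ + 1 := Int.lt_floor_add_one _
  rw [h] at h1 h2
  have h5 : a / ρ - b / ρ < 1 := by linarith
  have h6 : b / ρ - a / ρ < 1 := by linarith
  rw [abs_lt]
  have hA : (a - b)/ρ < 1 := by rw [sub_div]; linarith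
  have hB : (b - a)/ρ < 1 := by rw [sub_div]; linarith
  have hA' := (div_lt_one hρ).1 hA
  have hB' := (div_lt_one hρ).1 hB
  constructor <;> linarith

/-- Grid construction: internal covers of the cube class exist, with cardinality
at most `(⌊1/ρ⌋ + 1) ^ n`. -/
lemma grid_cover (V : Set (Fin n → ℝ)) (hcube : ∀ v ∈ V, ∀ i, v i ∈ Set.Icc (0:ℝ) 1)
    {ρ : ℝ} (hρ : 0 < ρ) :
    ∃ N ∈ coverSet n V ρ, N ≤ ((⌊1/ρ⌋).toNat + 1)^n := by
  classical
  set Φ : (Fin n → ℝ) → (Fin n → ℤ) := fun v i => ⌊v i / ρ⌋ with hΦ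
  set T : Set (Fin n → ℤ) := Φ '' V with hT
  have hTsub : T ⊆ Set.Icc (fun _ => (0:ℤ)) (fun _ => ⌊1/ρ⌋) := by
    rintro t ⟨v, hv, rfl⟩
    constructor
    · intro i
      exact Int.floor_nonneg.2 (by
        have := (hcube v hv i).1; positivity)
    · intro i
      apply Int.floor_le_floor
      have h1 := (hcube v hv i).2
      exact div_le_div_of_nonneg_right h1 hρ.le
  have hTfin : T.Finite := (Set.finite_Icc _ _).subset hTsub
  set N : ℕ := hTfin.toFinset.card with hN
  have hrep : ∀ t ∈ T, ∃ v, v ∈ V ∧ Φ v = t := by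
    rintro t ⟨v, hv, rfl⟩; exact ⟨v, hv, rfl⟩
  choose rep hrepV hrepΦ using hrep
  set e := hTfin.toFinset.equivFin with he
  refine ⟨N, ⟨fun k => rep (e.symm k).1 (hTfin.mem_toFinset.1 (e.symm k).2), ?_, ?_⟩, ?_⟩
  · intro k; exact hrepV _ _
  · intro v hv
    have htmem : Φ v ∈ T := ⟨v, hv, rfl⟩
    refine ⟨e ⟨Φ v, hTfin.mem_toFinset.2 htmem⟩, ?_⟩
    set k := e ⟨Φ v, hTfin.mem_toFinset.2 htmem⟩ with hk
    have hsymm : (e.symm k).1 = Φ v := by rw [hk, Equiv.symm_apply_apply]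
    set c := rep (e.symm k).1 (hTfin.mem_toFinset.1 (e.symm k).2) with hc
    have hΦc : Φ c = Φ v := by
      rw [hc]
      rw [hrepΦ]
      exact hsymm
    have habs : ∀ i, |v i - c i| < ρ := by
      intro i
      apply abs_sub_lt_of_floor_div_eq hρ
      have := congrFun hΦc i
      rw [hΦ] at this
      exact (this).symm
    rw [d2]
    rw [show ρ = Real.sqrt (ρ^2) by rw [Real.sqrt_sq hρ.le]]
    apply Real.sqrt_le_sqrt
    have hsum : ∑ i, (v i - c i)^2 ≤ (n:ℝ) * ρ^2 := by
      calc ∑ i, (v i - c i)^2 ≤ ∑ _i : Fin n, ρ^2 := by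
            refine Finset.sum_le_sum fun i _ => ?_
            have := habs i
            nlinarith [abs_nonneg (v i - c i), sq_abs (v i - c i)]
        _ = (n:ℝ) * ρ^2 := by simp [mul_comm]
    rcases Nat.eq_zero_or_pos n with h0 | hpos
    · subst h0; simp; positivity
    · have hn : (0:ℝ) < n := by exact_mod_cast hpos
      calc (n:ℝ)⁻¹ * ∑ i, (v i - c i)^2 ≤ (n:ℝ)⁻¹ * ((n:ℝ) * ρ^2) := by
            exact mul_le_mul_of_nonneg_left hsum (by positivity)
        _ = ρ^2 := by field_simp
  · -- cardinality bound
    have hfl : (0:ℤ) ≤ ⌊1/ρ⌋ := Int.floor_nonneg.2 (by positivity)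
    have hsub2 : hTfin.toFinset ⊆ Finset.Icc (fun _ => (0:ℤ)) (fun _ => ⌊1/ρ⌋) := by
      intro t ht
      rw [Finset.mem_Icc]
      exact hTsub (hTfin.mem_toFinset.1 ht)
    calc N ≤ (Finset.Icc (fun _ => (0:ℤ)) (fun _ => ⌊1/ρ⌋)).card :=
          Finset.card_le_card hsub2
      _ = ((⌊1/ρ⌋).toNat + 1)^n := by
          rw [Pi.card_Icc]
          have : ∀ i : Fin n, (Finset.Icc (0:ℤ) ⌊1/ρ⌋).card = (⌊1/ρ⌋).toNat + 1 := by
            intro i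
            rw [Int.card_Icc]
            omega
          rw [Finset.prod_congr rfl (fun i _ => this i)]
          simp


end RST

namespace RST
open Finset
set_option maxHeartbeats 1000000

section Cov
variable {n : ℕ} (V : Set (Fin n → ℝ))

lemma coverSet_mono {ρ ρ' : ℝ} (h : ρ ≤ ρ') : coverSet n V ρ ⊆ coverSet n V ρ' := by
  rintro N ⟨c, hc, hcov⟩
  exact ⟨c, hc, fun v hv => (hcov v hv).imp fun i hi => hi.trans h⟩

lemma coverSet_nonempty (hcube : ∀ v ∈ V, ∀ i, v i ∈ Set.Icc (0:ℝ) 1)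
    {ρ : ℝ} (hρ : 0 < ρ) : (coverSet n V ρ).Nonempty := by
  obtain ⟨N, hN, _⟩ := grid_cover V hcube hρ
  exact ⟨N, hN⟩

lemma covV_mem (hcube : ∀ v ∈ V, ∀ i, v i ∈ Set.Icc (0:ℝ) 1) {ρ : ℝ} (hρ : 0 < ρ) :
    covV n V ρ ∈ coverSet n V ρ :=
  Nat.sInf_mem (coverSet_nonempty V hcube hρ)

lemma covV_le_grid (hcube : ∀ v ∈ V, ∀ i, v i ∈ Set.Icc (0:ℝ) 1) {ρ : ℝ} (hρ : 0 < ρ) :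
    covV n V ρ ≤ ((⌊1/ρ⌋).toNat + 1)^n := by
  obtain ⟨N, hN, hle⟩ := grid_cover V hcube hρ
  exact (Nat.sInf_le hN).trans hle

lemma one_le_covV (hcube : ∀ v ∈ V, ∀ i, v i ∈ Set.Icc (0:ℝ) 1) (hne : V.Nonempty)
    {ρ : ℝ} (hρ : 0 < ρ) : 1 ≤ covV n V ρ := by
  rw [Nat.one_le_iff_ne_zero]
  intro h0
  have hm := covV_mem V hcube hρ
  rw [h0] at hm
  obtain ⟨c, _, hcov⟩ := hm
  obtain ⟨v, hv⟩ := hne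
  obtain ⟨i, _⟩ := hcov v hv
  exact i.elim0

lemma covV_antitone (hcube : ∀ v ∈ V, ∀ i, v i ∈ Set.Icc (0:ℝ) 1) {ρ ρ' : ℝ}
    (h0 : 0 < ρ) (h : ρ ≤ ρ') : covV n V ρ' ≤ covV n V ρ :=
  Nat.sInf_le (coverSet_mono V h (covV_mem V hcube h0))

lemma covV_of_one_le (hcube : ∀ v ∈ V, ∀ i, v i ∈ Set.Icc (0:ℝ) 1) (hne : V.Nonempty)
    {ρ : ℝ} (h1 : 1 ≤ ρ) : covV n V ρ = 1 := by
  obtain ⟨v0, hv0⟩ := hne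
  have hmem : (1:ℕ) ∈ coverSet n V ρ :=
    ⟨fun _ => v0, fun _ => hv0, fun v hv =>
      ⟨0, (d2_le_one (hcube v hv) (hcube v0 hv0)).trans h1⟩⟩
  exact le_antisymm (Nat.sInf_le hmem)
    (one_le_covV V hcube ⟨v0, hv0⟩ (lt_of_lt_of_le one_pos h1))

lemma covV_empty (h : V = ∅) (ρ : ℝ) : covV n V ρ = 0 :=
  Nat.le_zero.1 (Nat.sInf_le (by
    refine ⟨fun i => i.elim0, fun i => i.elim0, fun v hv => ?_⟩
    rw [h] at hv; exact absurd hv (Set.notMem_empty v)))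

/-- The entropy integrand. -/
noncomputable def gfun (n : ℕ) (V : Set (Fin n → ℝ)) : ℝ → ℝ :=
  fun ρ => Real.sqrt (Real.log (covV n V ρ))

lemma gfun_nonneg (ρ : ℝ) : 0 ≤ gfun n V ρ := Real.sqrt_nonneg _

lemma gfun_antitoneOn (hcube : ∀ v ∈ V, ∀ i, v i ∈ Set.Icc (0:ℝ) 1) (hne : V.Nonempty) :
    AntitoneOn (gfun n V) (Set.Ioi 0) := by
  intro ρ hρ ρ' hρ' h
  apply Real.sqrt_le_sqrt
  have hρ0 : (0:ℝ) < ρ := hρ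
  have hρ'0 : (0:ℝ) < ρ' := hρ'
  have h1 : (0:ℝ) < (covV n V ρ' : ℝ) := by
    have := one_le_covV V hcube hne hρ'0
    exact_mod_cast Nat.lt_of_lt_of_le Nat.zero_lt_one this
  apply Real.log_le_log h1
  exact_mod_cast covV_antitone V hcube hρ0 h

lemma gfun_intervalIntegrable (hcube : ∀ v ∈ V, ∀ i, v i ∈ Set.Icc (0:ℝ) 1)
    (hne : V.Nonempty) {a b : ℝ} (ha : 0 < a) (hb : 0 < b) :
    IntervalIntegrable (gfun n V) volume a b := by
  apply AntitoneOn.intervalIntegrable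
  apply (gfun_antitoneOn V hcube hne).mono
  intro x hx
  rcases Set.mem_uIcc.1 hx with ⟨h1, _⟩ | ⟨h1, _⟩
  · exact lt_of_lt_of_le ha h1
  · exact lt_of_lt_of_le hb h1

lemma gfun_le (hcube : ∀ v ∈ V, ∀ i, v i ∈ Set.Icc (0:ℝ) 1) (hne : V.Nonempty)
    {ρ : ℝ} (hρ : ρ ∈ Set.Ioc (0:ℝ) 1) :
    gfun n V ρ ≤ 1 + n * Real.log 2 + 2 * n * ρ ^ (-(1:ℝ)/2) := by
  obtain ⟨hρ0, hρ1⟩ := hρ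
  have hcov1 : (1:ℝ) ≤ covV n V ρ := by exact_mod_cast one_le_covV V hcube hne hρ0
  have hgrid : (covV n V ρ : ℝ) ≤ (2/ρ)^n := by
    have h1 : (covV n V ρ : ℝ) ≤ (((⌊1/ρ⌋).toNat + 1 : ℕ) : ℝ)^n := by
      exact_mod_cast covV_le_grid V hcube hρ0
    refine h1.trans (pow_le_pow_left₀ (by positivity) ?_ n)
    have hnn : (0:ℤ) ≤ ⌊1/ρ⌋ := Int.floor_nonneg.2 (by positivity)
    have hcast : (((⌊1/ρ⌋).toNat : ℕ) : ℝ) = ((⌊1/ρ⌋ : ℤ) : ℝ) := by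
      exact_mod_cast congrArg (fun z : ℤ => (z : ℝ)) (Int.toNat_of_nonneg hnn)
    have h2 : (((⌊1/ρ⌋).toNat : ℕ) : ℝ) ≤ 1/ρ := by
      rw [hcast]; exact Int.floor_le _
    have h3 : (1:ℝ) ≤ 1/ρ := by
      rw [le_div_iff₀ hρ0]; linarith
    push_cast
    calc ((⌊1/ρ⌋).toNat : ℝ) + 1 ≤ 1/ρ + 1/ρ := by push_cast at h2; linarith
      _ = 2/ρ := by ring
  have hlog : Real.log (covV n V ρ) ≤ n * (Real.log 2 + 2 * ρ ^ (-(1:ℝ)/2)) := by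
    have h4 := Real.log_le_log (by linarith) hgrid
    rw [Real.log_pow] at h4
    have h5 : Real.log (2/ρ) ≤ Real.log 2 + 2 * ρ ^ (-(1:ℝ)/2) := by
      rw [Real.log_div (by norm_num) (ne_of_gt hρ0)]
      have h6 : -Real.log ρ ≤ 2 * ρ ^ (-(1:ℝ)/2) := by
        have hsq : Real.log ρ = 2 * Real.log (Real.sqrt ρ) := by
          rw [Real.log_sqrt hρ0.le]; ring
        have h7 : Real.log ((Real.sqrt ρ)⁻¹) ≤ (Real.sqrt ρ)⁻¹ - 1 :=
          Real.log_le_sub_one_of_pos (by positivity)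
        have h8 : (Real.sqrt ρ)⁻¹ = ρ ^ (-(1:ℝ)/2) := by
          rw [Real.sqrt_eq_rpow, ← Real.rpow_neg hρ0.le]
          norm_num
        rw [Real.log_inv] at h7
        have h9 : (0:ℝ) ≤ ρ ^ (-(1:ℝ)/2) := by positivity
        rw [h8] at h7
        nlinarith [hsq]
      linarith
    calc Real.log (covV n V ρ) ≤ n * Real.log (2/ρ) := h4
      _ ≤ n * (Real.log 2 + 2 * ρ ^ (-(1:ℝ)/2)) := by
          apply mul_le_mul_of_nonneg_left h5 (by positivity)
  have hx : (0:ℝ) ≤ Real.log (covV n V ρ) := Real.log_nonneg hcov1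
  calc gfun n V ρ ≤ 1 + Real.log (covV n V ρ) := by
        rw [gfun]
        have hsq2 : Real.log (covV n V ρ) ≤ (1 + Real.log (covV n V ρ))^2 := by nlinarith
        calc Real.sqrt (Real.log (covV n V ρ)) ≤
            Real.sqrt ((1 + Real.log (covV n V ρ))^2) := Real.sqrt_le_sqrt hsq2
          _ = 1 + Real.log (covV n V ρ) := Real.sqrt_sq (by linarith)
    _ ≤ 1 + n * (Real.log 2 + 2 * ρ ^ (-(1:ℝ)/2)) := by linarith
    _ = 1 + n * Real.log 2 + 2 * n * ρ ^ (-(1:ℝ)/2) := by ring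

lemma gfun_integrable01 (hcube : ∀ v ∈ V, ∀ i, v i ∈ Set.Icc (0:ℝ) 1) (hne : V.Nonempty) :
    IntervalIntegrable (gfun n V) volume 0 1 := by
  have hdom : IntervalIntegrable
      (fun ρ : ℝ => 1 + n * Real.log 2 + 2 * n * ρ ^ (-(1:ℝ)/2)) volume 0 1 := by
    apply IntervalIntegrable.add
    · exact intervalIntegrable_const
    · have h := intervalIntegral.intervalIntegrable_rpow'
        (a := (0:ℝ)) (b := 1) (r := -(1:ℝ)/2) (by norm_num)
      simpa [mul_comm] using h.const_mul (2 * n : ℝ)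
  rw [intervalIntegrable_iff_integrableOn_Ioc_of_le (by norm_num : (0:ℝ) ≤ 1)]
  rw [intervalIntegrable_iff_integrableOn_Ioc_of_le (by norm_num : (0:ℝ) ≤ 1)] at hdom
  apply Integrable.mono' hdom
  · apply AEMeasurable.aestronglyMeasurable
    apply aemeasurable_restrict_of_antitoneOn measurableSet_Ioc
    exact (gfun_antitoneOn V hcube hne).mono (fun x hx => hx.1)
  · rw [ae_restrict_iff' measurableSet_Ioc]
    apply Filter.Eventually.of_forall
    intro ρ hρ
    rw [Real.norm_eq_abs, abs_of_nonneg (gfun_nonneg V ρ)]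
    exact gfun_le V hcube hne hρ

end Cov
end RST

namespace RST
open Finset
set_option maxHeartbeats 4000000
variable {n : ℕ}
noncomputable def radV (n : ℕ) (V : Set (Fin n → ℝ)) : ℝ :=
  ((2:ℝ)^n)⁻¹ * ∑ σ : Fin n → Bool,
    sSup ((fun v => (n:ℝ)⁻¹ * ∑ i, sg (σ i) * v i) '' V)

lemma inner_sub_split (σ : Fin n → Bool) (u v : Fin n → ℝ) :
    (n:ℝ)⁻¹ * ∑ i, sg (σ i) * (u i - v i)
      = (n:ℝ)⁻¹ * (∑ i, sg (σ i) * u i) - (n:ℝ)⁻¹ * (∑ i, sg (σ i) * v i) := by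
  rw [← mul_sub, ← Finset.sum_sub_distrib]
  congr 1
  exact Finset.sum_congr rfl fun i _ => by ring

lemma inv_mul_sqrt (hn : 0 < n) : (n:ℝ)⁻¹ * Real.sqrt n = (Real.sqrt n)⁻¹ := by
  have h : (0:ℝ) < n := by exact_mod_cast hn
  rw [← Real.sqrt_mul_self h.le]
  field_simp
  rw [Real.sq_sqrt (Real.sqrt_nonneg _)]

/-- **The chaining bound.** -/
lemma chaining (hn : 0 < n) (V : Set (Fin n → ℝ))
    (hcube : ∀ v ∈ V, ∀ i, v i ∈ Set.Icc (0:ℝ) 1) (hne : V.Nonempty) (K : ℕ) :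
    radV n V ≤ (2:ℝ)⁻¹^K +
      ∑ j ∈ Finset.range K,
        6 / Real.sqrt n * ((2:ℝ)⁻¹^(j+1) * gfun n V ((2:ℝ)⁻¹^(j+1))) := by
  classical
  obtain ⟨v0, hv0⟩ := hne
  set ε : ℕ → ℝ := fun j => (2:ℝ)⁻¹ ^ j with hε
  have hεpos : ∀ j, 0 < ε j := fun j => by positivity
  have hεsucc : ∀ j, ε j = 2 * ε (j+1) := by
    intro j
    rw [hε]
    simp only [pow_succ]
    ring
  -- covers at every scale
  have hcov : ∀ j : ℕ, ∃ (N : ℕ) (c : Fin N → Fin n → ℝ),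
      (∀ k, c k ∈ V) ∧ (∀ v ∈ V, ∃ k, d2 n v (c k) ≤ ε j) ∧
      (j = 0 → N = 1) ∧ (j ≠ 0 → N = covV n V (ε j)) := by
    intro j
    cases j with
    | zero =>
        refine ⟨1, fun _ => v0, fun _ => hv0, fun v hv => ⟨0, ?_⟩, fun _ => rfl,
          fun h => absurd rfl h⟩
        have h1 : ε 0 = 1 := by rw [hε]; simp
        rw [h1]
        exact d2_le_one (hcube v hv) (hcube v0 hv0)
    | succ m =>
        obtain ⟨c, hc1, hc2⟩ := covV_mem V hcube (hεpos (m+1))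
        exact ⟨covV n V (ε (m+1)), c, hc1, hc2, fun h => absurd h (Nat.succ_ne_zero m),
          fun _ => rfl⟩
  choose N c hcV hcnear hN0 hNj using hcov
  choose p hp using hcnear
  have hN0' : N 0 = 1 := hN0 0 rfl
  -- the base point
  set u0 : Fin n → ℝ := c 0 (p 0 v0 hv0) with hu0
  have hbase : ∀ (v : Fin n → ℝ) (hv : v ∈ V), c 0 (p 0 v hv) = u0 := by
    intro v hv
    have : p 0 v hv = p 0 v0 hv0 := by
      apply Fin.ext
      have h1 := (p 0 v hv).isLt
      have h2 := (p 0 v0 hv0).isLt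
      omega
    rw [hu0, this]
  -- monotonicity of cover sizes
  have hNmono : ∀ j, N j ≤ N (j+1) := by
    intro j
    rw [hNj (j+1) (Nat.succ_ne_zero j)]
    cases j with
    | zero =>
        rw [hN0']
        exact one_le_covV V hcube ⟨v0, hv0⟩ (hεpos 1)
    | succ m =>
        rw [hNj (m+1) (Nat.succ_ne_zero m)]
        apply covV_antitone V hcube (hεpos (m+2))
        rw [hε]
        exact pow_le_pow_of_le_one (by norm_num) (by norm_num) (by omega)
  have hNone : ∀ j, 1 ≤ N j := by
    intro j
    induction j with
    | zero => omega
    | succ m ih => exact le_trans ih (hNmono m)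
  -- realized pairs at each level
  have hAfin : ∀ j : ℕ, (({q : Fin (N (j+1)) × Fin (N j) |
      ∃ (v : Fin n → ℝ) (hv : v ∈ V), q = (p (j+1) v hv, p j v hv)}) : Set _).Finite :=
    fun j => Set.toFinite _
  set A : ∀ j : ℕ, Finset (Fin (N (j+1)) × Fin (N j)) := fun j => (hAfin j).toFinset
    with hA
  have hmemA : ∀ j (v : Fin n → ℝ) (hv : v ∈ V), (p (j+1) v hv, p j v hv) ∈ A j := by
    intro j v hv
    rw [hA]
    simp only [Set.Finite.mem_toFinset, Set.mem_setOf_eq]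
    exact ⟨v, hv, rfl⟩
  have hAne : ∀ j, (A j).Nonempty := fun j => ⟨_, hmemA j v0 hv0⟩
  set w : ∀ j : ℕ, (Fin (N (j+1)) × Fin (N j)) → Fin n → ℝ :=
    fun j q i => c (j+1) q.1 i - c j q.2 i with hw
  -- distance bound on realized pairs
  have hwb : ∀ j, ∀ q ∈ A j, Real.sqrt (∑ i, (w j q i)^2) ≤
      Real.sqrt n * (3 * ε (j+1)) := by
    intro j q hq
    rw [hA] at hq
    simp only [Set.Finite.mem_toFinset, Set.mem_setOf_eq] at hq
    obtain ⟨v, hv, rfl⟩ := hq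
    have heq : Real.sqrt (∑ i, (w j (p (j+1) v hv, p j v hv) i)^2)
        = Real.sqrt n * d2 n (c (j+1) (p (j+1) v hv)) (c j (p j v hv)) := by
      rw [hw]
      exact nrm_sub_eq _ _
    rw [heq]
    have hd : d2 n (c (j+1) (p (j+1) v hv)) (c j (p j v hv)) ≤ 3 * ε (j+1) := by
      calc d2 n (c (j+1) (p (j+1) v hv)) (c j (p j v hv))
          ≤ d2 n (c (j+1) (p (j+1) v hv)) v + d2 n v (c j (p j v hv)) :=
            d2_triangle _ _ _
        _ = d2 n v (c (j+1) (p (j+1) v hv)) + d2 n v (c j (p j v hv)) := by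
            rw [d2_comm]
        _ ≤ ε (j+1) + ε j := add_le_add (hp (j+1) v hv) (hp j v hv)
        _ = 3 * ε (j+1) := by rw [hεsucc j]; ring
    exact mul_le_mul_of_nonneg_left hd (Real.sqrt_nonneg _)
  -- Massart at each level
  have hmas : ∀ j, ((2:ℝ)^n)⁻¹ * ∑ σ : Fin n → Bool,
      (A j).sup' (hAne j) (fun q => ∑ i, sg (σ i) * w j q i) ≤
        Real.sqrt n * (3 * ε (j+1)) * (2 * gfun n V (ε (j+1))) := by
    intro j
    have h1 := massart (A j) (hAne j) (w j) (Real.sqrt n * (3 * ε (j+1)))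
      (by positivity) (hwb j)
    refine h1.trans ?_
    apply mul_le_mul_of_nonneg_left _ (by positivity)
    -- √(2 log |A j|) ≤ 2 √(log covV (ε (j+1)))
    have hcard : (A j).card ≤ (N (j+1))^2 := by
      calc (A j).card ≤ Fintype.card (Fin (N (j+1)) × Fin (N j)) := Finset.card_le_univ _
        _ = N (j+1) * N j := by simp
        _ ≤ N (j+1) * N (j+1) := Nat.mul_le_mul_left _ (hNmono j)
        _ = (N (j+1))^2 := (sq (N (j+1))).symm
    have hcard1 : 1 ≤ (A j).card := (hAne j).card_pos
    have hNval : N (j+1) = covV n V (ε (j+1)) := hNj (j+1) (Nat.succ_ne_zero j)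
    have hN1 : 1 ≤ N (j+1) := hNone (j+1)
    have hlogcard : Real.log (A j).card ≤ 2 * Real.log (covV n V (ε (j+1))) := by
      have h2 : ((A j).card : ℝ) ≤ ((N (j+1) : ℝ))^2 := by exact_mod_cast hcard
      have h3 := Real.log_le_log (by exact_mod_cast hcard1) h2
      rw [Real.log_pow] at h3
      rw [← hNval]
      exact h3.trans (by norm_num)
    have hg : gfun n V (ε (j+1)) = Real.sqrt (Real.log (covV n V (ε (j+1)))) := rfl
    have hlognn : 0 ≤ Real.log (covV n V (ε (j+1))) := by
      apply Real.log_nonneg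
      rw [← hNval]
      exact_mod_cast hN1
    calc Real.sqrt (2 * Real.log (A j).card)
        ≤ Real.sqrt (4 * Real.log (covV n V (ε (j+1)))) := by
          apply Real.sqrt_le_sqrt
          linarith
      _ = 2 * gfun n V (ε (j+1)) := by
          rw [hg, show (4:ℝ) * Real.log (covV n V (ε (j+1)))
              = 2^2 * Real.log (covV n V (ε (j+1))) by norm_num,
            Real.sqrt_mul (by positivity), Real.sqrt_sq (by norm_num)]
  -- pointwise chain decomposition and sSup bound
  have hkey : ∀ σ : Fin n → Bool,
      sSup ((fun v => (n:ℝ)⁻¹ * ∑ i, sg (σ i) * v i) '' V) ≤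
        ε K + (n:ℝ)⁻¹ * ∑ j ∈ Finset.range K,
            (A j).sup' (hAne j) (fun q => ∑ i, sg (σ i) * w j q i)
          + (n:ℝ)⁻¹ * ∑ i, sg (σ i) * u0 i := by
    intro σ
    apply csSup_le (Set.Nonempty.image _ ⟨v0, hv0⟩)
    rintro x ⟨v, hv, rfl⟩
    show (n:ℝ)⁻¹ * ∑ i, sg (σ i) * v i ≤ _
    set F : ℕ → ℝ := fun j => (n:ℝ)⁻¹ * ∑ i, sg (σ i) * c j (p j v hv) i with hF
    have h1 : (n:ℝ)⁻¹ * ∑ i, sg (σ i) * (v i - c K (p K v hv) i)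
        = (n:ℝ)⁻¹ * (∑ i, sg (σ i) * v i) - F K := inner_sub_split σ v _
    have h2 : ∑ j ∈ Finset.range K,
        ((n:ℝ)⁻¹ * ∑ i, sg (σ i) * (c (j+1) (p (j+1) v hv) i - c j (p j v hv) i))
        = F K - F 0 := by
      rw [Finset.sum_congr rfl (fun j _ => inner_sub_split σ _ _)]
      exact Finset.sum_range_sub F K
    have h3 : F 0 = (n:ℝ)⁻¹ * ∑ i, sg (σ i) * u0 i := by
      rw [hF]
      simp only []
      rw [hbase v hv]
    have hdec : (n:ℝ)⁻¹ * ∑ i, sg (σ i) * v i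
        = ((n:ℝ)⁻¹ * ∑ i, sg (σ i) * (v i - c K (p K v hv) i))
          + (∑ j ∈ Finset.range K,
              ((n:ℝ)⁻¹ * ∑ i, sg (σ i) * (c (j+1) (p (j+1) v hv) i - c j (p j v hv) i)))
          + F 0 := by
      rw [h1, h2]; ring
    rw [hdec, h3]
    have hb1 : (n:ℝ)⁻¹ * ∑ i, sg (σ i) * (v i - c K (p K v hv) i) ≤ ε K :=
      (inner_sg_le_d2 hn σ v _).trans (hp K v hv)
    have hb2 : ∑ j ∈ Finset.range K,
        ((n:ℝ)⁻¹ * ∑ i, sg (σ i) * (c (j+1) (p (j+1) v hv) i - c j (p j v hv) i))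
        ≤ (n:ℝ)⁻¹ * ∑ j ∈ Finset.range K,
            (A j).sup' (hAne j) (fun q => ∑ i, sg (σ i) * w j q i) := by
      rw [Finset.mul_sum]
      apply Finset.sum_le_sum
      intro j _
      apply mul_le_mul_of_nonneg_left _ (by positivity)
      have := Finset.le_sup' (f := fun q => ∑ i, sg (σ i) * w j q i)
        (hmemA j v hv)
      exact this
    linarith
  -- average over σ
  have hcard2 : ((Finset.univ : Finset (Fin n → Bool)).card : ℝ) = 2 ^ n := by
    simp [Finset.card_univ, Fintype.card_fun]
  have h2pos : (0:ℝ) < 2^n := by positivity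
  calc radV n V
      ≤ ((2:ℝ)^n)⁻¹ * ∑ σ : Fin n → Bool,
          (ε K + (n:ℝ)⁻¹ * ∑ j ∈ Finset.range K,
              (A j).sup' (hAne j) (fun q => ∑ i, sg (σ i) * w j q i)
            + (n:ℝ)⁻¹ * ∑ i, sg (σ i) * u0 i) := by
        rw [radV]
        apply mul_le_mul_of_nonneg_left _ (by positivity)
        exact Finset.sum_le_sum fun σ _ => hkey σ
    _ = ε K + ∑ j ∈ Finset.range K, ((n:ℝ)⁻¹ *
          (((2:ℝ)^n)⁻¹ * ∑ σ : Fin n → Bool,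
            (A j).sup' (hAne j) (fun q => ∑ i, sg (σ i) * w j q i))) := by
        have e0 : ∑ σ : Fin n → Bool, (n:ℝ)⁻¹ * ∑ i, sg (σ i) * u0 i = 0 := by
          rw [← Finset.mul_sum, sum_sg_inner_zero, mul_zero]
        have e1 : ∑ _σ : Fin n → Bool, ε K = (2:ℝ)^n * ε K := by
          rw [Finset.sum_const, nsmul_eq_mul, hcard2]
        have e2 : ∑ σ : Fin n → Bool, ((n:ℝ)⁻¹ * ∑ j ∈ Finset.range K,
              (A j).sup' (hAne j) (fun q => ∑ i, sg (σ i) * w j q i))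
            = ∑ j ∈ Finset.range K, ((n:ℝ)⁻¹ * ∑ σ : Fin n → Bool,
              (A j).sup' (hAne j) (fun q => ∑ i, sg (σ i) * w j q i)) := by
          rw [← Finset.mul_sum, Finset.sum_comm, Finset.mul_sum]
        rw [Finset.sum_add_distrib, Finset.sum_add_distrib, e0, e1, e2, add_zero,
          mul_add, Finset.mul_sum]
        have e3 : ((2:ℝ)^n)⁻¹ * ((2:ℝ)^n * ε K) = ε K := by field_simp
        rw [e3]
        congr 1
        apply Finset.sum_congr rfl
        intro j _
        ring
    _ ≤ ε K + ∑ j ∈ Finset.range K,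
          6 / Real.sqrt n * (ε (j+1) * gfun n V (ε (j+1))) := by
        apply add_le_add_right
        apply Finset.sum_le_sum
        intro j _
        calc (n:ℝ)⁻¹ * (((2:ℝ)^n)⁻¹ * ∑ σ : Fin n → Bool,
              (A j).sup' (hAne j) (fun q => ∑ i, sg (σ i) * w j q i))
            ≤ (n:ℝ)⁻¹ * (Real.sqrt n * (3 * ε (j+1)) * (2 * gfun n V (ε (j+1)))) :=
              mul_le_mul_of_nonneg_left (hmas j) (by positivity)
          _ = ((n:ℝ)⁻¹ * Real.sqrt n) * (6 * (ε (j+1) * gfun n V (ε (j+1)))) := by ring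
          _ = 6 / Real.sqrt n * (ε (j+1) * gfun n V (ε (j+1))) := by
              rw [inv_mul_sqrt hn, div_eq_mul_inv]
              ring
    _ = (2:ℝ)⁻¹^K + ∑ j ∈ Finset.range K,
          6 / Real.sqrt n * ((2:ℝ)⁻¹^(j+1) * gfun n V ((2:ℝ)⁻¹^(j+1))) := rfl


end RST

namespace RST
open Finset
set_option maxHeartbeats 4000000
variable {n : ℕ}
lemma sum_le_integral (V : Set (Fin n → ℝ))
    (hcube : ∀ v ∈ V, ∀ i, v i ∈ Set.Icc (0:ℝ) 1) (hne : V.Nonempty) (K : ℕ) :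
    ∑ j ∈ Finset.range K,
        6 / Real.sqrt n * ((2:ℝ)⁻¹^(j+1) * gfun n V ((2:ℝ)⁻¹^(j+1)))
      ≤ 12 / Real.sqrt n * ∫ ρ in ((2:ℝ)⁻¹^(K+1))..1, gfun n V ρ := by
  have hgInt : ∀ a b : ℝ, 0 < a → 0 < b → IntervalIntegrable (gfun n V) volume a b :=
    fun a b ha hb => gfun_intervalIntegrable V hcube hne ha hb
  have hstep : ∀ j : ℕ, (2:ℝ)⁻¹^(j+1) * gfun n V ((2:ℝ)⁻¹^(j+1)) ≤
      2 * ∫ ρ in ((2:ℝ)⁻¹^(j+2))..((2:ℝ)⁻¹^(j+1)), gfun n V ρ := by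
    intro j
    have hle : (2:ℝ)⁻¹^(j+2) ≤ (2:ℝ)⁻¹^(j+1) :=
      pow_le_pow_of_le_one (by norm_num) (by norm_num) (by omega)
    have hconst : ∫ _ρ in ((2:ℝ)⁻¹^(j+2))..((2:ℝ)⁻¹^(j+1)), gfun n V ((2:ℝ)⁻¹^(j+1))
        = ((2:ℝ)⁻¹^(j+1) - (2:ℝ)⁻¹^(j+2)) * gfun n V ((2:ℝ)⁻¹^(j+1)) := by
      rw [intervalIntegral.integral_const, smul_eq_mul]
    have hmono : (∫ _ρ in ((2:ℝ)⁻¹^(j+2))..((2:ℝ)⁻¹^(j+1)), gfun n V ((2:ℝ)⁻¹^(j+1)))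
        ≤ ∫ ρ in ((2:ℝ)⁻¹^(j+2))..((2:ℝ)⁻¹^(j+1)), gfun n V ρ := by
      apply intervalIntegral.integral_mono_on hle intervalIntegrable_const
        (hgInt _ _ (by positivity) (by positivity))
      intro x hx
      exact gfun_antitoneOn V hcube hne
        (Set.mem_Ioi.2 (lt_of_lt_of_le (by positivity) hx.1))
        (Set.mem_Ioi.2 (by positivity)) hx.2
    have hdiff : (2:ℝ)⁻¹^(j+1) = 2 * ((2:ℝ)⁻¹^(j+1) - (2:ℝ)⁻¹^(j+2)) := by
      rw [pow_succ ((2:ℝ)⁻¹) (j+1)]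
      ring
    calc (2:ℝ)⁻¹^(j+1) * gfun n V ((2:ℝ)⁻¹^(j+1))
        = 2 * (((2:ℝ)⁻¹^(j+1) - (2:ℝ)⁻¹^(j+2)) * gfun n V ((2:ℝ)⁻¹^(j+1))) := by
          rw [hdiff]; ring
      _ = 2 * ∫ _ρ in ((2:ℝ)⁻¹^(j+2))..((2:ℝ)⁻¹^(j+1)), gfun n V ((2:ℝ)⁻¹^(j+1)) := by
          rw [hconst]
      _ ≤ 2 * ∫ ρ in ((2:ℝ)⁻¹^(j+2))..((2:ℝ)⁻¹^(j+1)), gfun n V ρ := by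
          linarith
  have hsum2 : ∑ j ∈ Finset.range K,
      (∫ ρ in ((2:ℝ)⁻¹^(j+2))..((2:ℝ)⁻¹^(j+1)), gfun n V ρ)
      = ∫ ρ in ((2:ℝ)⁻¹^(K+1))..((2:ℝ)⁻¹^(1:ℕ)), gfun n V ρ := by
    set a : ℕ → ℝ := fun i => (2:ℝ)⁻¹^(K+1-i) with ha
    have hadj := intervalIntegral.sum_integral_adjacent_intervals (a := a) (n := K)
      (fun k _ => hgInt _ _ (by rw [ha]; positivity) (by rw [ha]; positivity))
    have hre := Finset.sum_range_reflect
      (fun j => ∫ ρ in ((2:ℝ)⁻¹^(j+2))..((2:ℝ)⁻¹^(j+1)), gfun n V ρ) K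
    rw [← hre]
    have heq : ∀ i ∈ Finset.range K,
        (∫ ρ in ((2:ℝ)⁻¹^((K-1-i)+2))..((2:ℝ)⁻¹^((K-1-i)+1)), gfun n V ρ)
        = ∫ ρ in (a i)..(a (i+1)), gfun n V ρ := by
      intro i hi
      rw [Finset.mem_range] at hi
      rw [ha]
      rw [show (K-1-i)+2 = K+1-i by omega, show (K-1-i)+1 = K+1-(i+1) by omega]
    rw [Finset.sum_congr rfl heq, hadj, ha]
    norm_num
  have hsplit := intervalIntegral.integral_add_adjacent_intervals
    (hgInt ((2:ℝ)⁻¹^(K+1)) ((2:ℝ)⁻¹) (by positivity) (by positivity))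
    (hgInt ((2:ℝ)⁻¹) 1 (by positivity) (by norm_num))
  have hnn : 0 ≤ ∫ ρ in ((2:ℝ)⁻¹:ℝ)..1, gfun n V ρ :=
    intervalIntegral.integral_nonneg (by norm_num) (fun u _ => gfun_nonneg V u)
  have hfinal : (∫ ρ in ((2:ℝ)⁻¹^(K+1))..((2:ℝ)⁻¹:ℝ), gfun n V ρ)
      ≤ ∫ ρ in ((2:ℝ)⁻¹^(K+1))..(1:ℝ), gfun n V ρ := by linarith
  calc ∑ j ∈ Finset.range K,
        6 / Real.sqrt n * ((2:ℝ)⁻¹^(j+1) * gfun n V ((2:ℝ)⁻¹^(j+1)))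
      ≤ ∑ j ∈ Finset.range K, 6 / Real.sqrt n *
          (2 * ∫ ρ in ((2:ℝ)⁻¹^(j+2))..((2:ℝ)⁻¹^(j+1)), gfun n V ρ) := by
        apply Finset.sum_le_sum
        intro j _
        exact mul_le_mul_of_nonneg_left (hstep j) (by positivity)
    _ = 12 / Real.sqrt n * ∑ j ∈ Finset.range K,
          (∫ ρ in ((2:ℝ)⁻¹^(j+2))..((2:ℝ)⁻¹^(j+1)), gfun n V ρ) := by
        rw [Finset.mul_sum]
        apply Finset.sum_congr rfl
        intro j _
        ring
    _ = 12 / Real.sqrt n * ∫ ρ in ((2:ℝ)⁻¹^(K+1))..((2:ℝ)⁻¹:ℝ), gfun n V ρ := by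
        rw [hsum2]; norm_num
    _ ≤ 12 / Real.sqrt n * ∫ ρ in ((2:ℝ)⁻¹^(K+1))..(1:ℝ), gfun n V ρ :=
        mul_le_mul_of_nonneg_left hfinal (by positivity)

lemma radV_le_one (hn : 1 ≤ n) (V : Set (Fin n → ℝ))
    (hcube : ∀ v ∈ V, ∀ i, v i ∈ Set.Icc (0:ℝ) 1) (hne : V.Nonempty) :
    radV n V ≤ 1 := by
  have hcard2 : ((Finset.univ : Finset (Fin n → Bool)).card : ℝ) = 2 ^ n := by
    simp [Finset.card_univ, Fintype.card_fun]
  have hb : ∀ σ : Fin n → Bool,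
      sSup ((fun v => (n:ℝ)⁻¹ * ∑ i, sg (σ i) * v i) '' V) ≤ 1 := by
    intro σ
    apply csSup_le (hne.image _)
    rintro x ⟨v, hv, rfl⟩
    show (n:ℝ)⁻¹ * ∑ i, sg (σ i) * v i ≤ 1
    have hsum : ∑ i, sg (σ i) * v i ≤ (n:ℝ) := by
      calc ∑ i, sg (σ i) * v i ≤ ∑ _i : Fin n, (1:ℝ) := by
            apply Finset.sum_le_sum
            intro i _
            refine (sg_mul_le _ _).trans ?_
            rw [abs_of_nonneg (hcube v hv i).1]
            exact (hcube v hv i).2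
        _ = (n:ℝ) := by simp
    have hnpos : (0:ℝ) < n := by exact_mod_cast hn
    calc (n:ℝ)⁻¹ * ∑ i, sg (σ i) * v i ≤ (n:ℝ)⁻¹ * (n:ℝ) :=
          mul_le_mul_of_nonneg_left hsum (by positivity)
      _ = 1 := by field_simp
  rw [radV]
  calc ((2:ℝ)^n)⁻¹ * ∑ σ : Fin n → Bool,
        sSup ((fun v => (n:ℝ)⁻¹ * ∑ i, sg (σ i) * v i) '' V)
      ≤ ((2:ℝ)^n)⁻¹ * ∑ _σ : Fin n → Bool, (1:ℝ) := by
        apply mul_le_mul_of_nonneg_left _ (by positivity)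
        exact Finset.sum_le_sum fun σ _ => hb σ
    _ = 1 := by
        rw [Finset.sum_const, nsmul_eq_mul, hcard2, mul_one]
        field_simp

lemma radV_empty (V : Set (Fin n → ℝ)) (h : V = ∅) : radV n V = 0 := by
  rw [radV, h]
  simp [Real.sSup_empty]

/-- **Dudley bound, vector version.** -/
theorem radV_bound (hn : 1 ≤ n) (V : Set (Fin n → ℝ))
    (hcube : ∀ v ∈ V, ∀ i, v i ∈ Set.Icc (0:ℝ) 1) (α : ℝ) (hα : 0 ≤ α) :
    radV n V ≤ 4 * α + 12 / Real.sqrt n * ∫ ρ in α..(1:ℝ), gfun n V ρ := by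
  classical
  rcases Set.eq_empty_or_nonempty V with hV | hne
  · -- empty class
    rw [radV_empty V hV]
    have hg0 : ∀ ρ : ℝ, gfun n V ρ = 0 := by
      intro ρ
      rw [gfun, covV_empty V hV]
      simp
    have : (∫ ρ in α..(1:ℝ), gfun n V ρ) = 0 := by
      rw [show (fun ρ => gfun n V ρ) = (fun _ : ℝ => (0:ℝ)) from funext hg0]
      simp
    rw [this]
    positivity
  -- nonempty class
  have hn0 : 0 < n := hn
  have key : ∀ K : ℕ,
      radV n V ≤ (2:ℝ)⁻¹^K + 12 / Real.sqrt n *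
        ∫ ρ in ((2:ℝ)⁻¹^(K+1))..1, gfun n V ρ :=
    fun K => (chaining hn0 V hcube hne K).trans
      (add_le_add_right (sum_le_integral V hcube hne K) _)
  rcases le_or_gt (4⁻¹ : ℝ) α with hα4 | hα4
  · -- trivial regime : α ≥ 1/4
    have hrad := radV_le_one hn V hcube hne
    rcases le_or_gt α 1 with hα1 | hα1
    · have hint : 0 ≤ ∫ ρ in α..(1:ℝ), gfun n V ρ :=
        intervalIntegral.integral_nonneg hα1 (fun u _ => gfun_nonneg V u)
      have h12 : 0 ≤ 12 / Real.sqrt n * ∫ ρ in α..(1:ℝ), gfun n V ρ := by positivity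
      linarith
    · -- α > 1 : the integral vanishes
      have hzero : (∫ ρ in (1:ℝ)..α, gfun n V ρ) = 0 := by
        have heqon : Set.EqOn (gfun n V) (fun _ => (0:ℝ)) (Set.uIcc 1 α) := by
          intro ρ hρ
          have h1ρ : 1 ≤ ρ := by
            rcases Set.mem_uIcc.1 hρ with ⟨h1, _⟩ | ⟨h1, h2⟩
            · exact h1
            · linarith
          rw [gfun, covV_of_one_le V hcube hne h1ρ]
          simp
        rw [intervalIntegral.integral_congr heqon]
        simp
      have : (∫ ρ in α..(1:ℝ), gfun n V ρ) = 0 := by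
        rw [intervalIntegral.integral_symm]
        rw [hzero]
        simp
      rw [this, mul_zero, add_zero]
      linarith
  · -- main regime : α < 1/4
    rcases eq_or_lt_of_le hα with hα0 | hα0
    · -- α = 0 : limit K → ∞
      rw [← hα0]
      have hint01 := gfun_integrable01 V hcube hne
      have hbound : ∀ K : ℕ, radV n V ≤ (2:ℝ)⁻¹^K +
          (4 * 0 + 12 / Real.sqrt n * ∫ ρ in (0:ℝ)..1, gfun n V ρ) := by
        intro K
        refine (key K).trans (add_le_add_right ?_ _)
        have hc : (0:ℝ) < (2:ℝ)⁻¹^(K+1) := by positivity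
        have hc1 : (2:ℝ)⁻¹^(K+1) ≤ 1 := by
          apply pow_le_one₀ (by norm_num) (by norm_num)
        have hI1 : IntervalIntegrable (gfun n V) volume 0 ((2:ℝ)⁻¹^(K+1)) := by
          apply hint01.mono_set
          rw [Set.uIcc_of_le hc.le, Set.uIcc_of_le (by norm_num : (0:ℝ) ≤ 1)]
          exact Set.Icc_subset_Icc le_rfl hc1
        have hI2 : IntervalIntegrable (gfun n V) volume ((2:ℝ)⁻¹^(K+1)) 1 :=
          gfun_intervalIntegrable V hcube hne hc (by norm_num)
        have hsplit := intervalIntegral.integral_add_adjacent_intervals hI1 hI2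
        have hnn : 0 ≤ ∫ ρ in (0:ℝ)..((2:ℝ)⁻¹^(K+1)), gfun n V ρ :=
          intervalIntegral.integral_nonneg hc.le (fun u _ => gfun_nonneg V u)
        have h12 : (∫ ρ in ((2:ℝ)⁻¹^(K+1))..1, gfun n V ρ)
            ≤ ∫ ρ in (0:ℝ)..1, gfun n V ρ := by linarith
        have h13 : (0:ℝ) ≤ 12 / Real.sqrt n := by positivity
        calc 12 / Real.sqrt n * ∫ ρ in ((2:ℝ)⁻¹^(K+1))..1, gfun n V ρ
            ≤ 12 / Real.sqrt n * ∫ ρ in (0:ℝ)..1, gfun n V ρ :=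
              mul_le_mul_of_nonneg_left h12 h13
          _ ≤ 4 * 0 + 12 / Real.sqrt n * ∫ ρ in (0:ℝ)..1, gfun n V ρ := by linarith
      have htend : Filter.Tendsto
          (fun K : ℕ => (2:ℝ)⁻¹^K +
            (4 * 0 + 12 / Real.sqrt n * ∫ ρ in (0:ℝ)..1, gfun n V ρ))
          Filter.atTop
          (nhds (0 + (4 * 0 + 12 / Real.sqrt n * ∫ ρ in (0:ℝ)..1, gfun n V ρ))) := by
        apply Filter.Tendsto.add_const
        exact tendsto_pow_atTop_nhds_zero_of_lt_one (by norm_num) (by norm_num)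
      rw [zero_add] at htend
      exact ge_of_tendsto htend (Filter.Eventually.of_forall hbound)
    · -- 0 < α < 1/4 : pick the right scale
      have hex : ∃ m : ℕ, (2:ℝ)⁻¹ ^ m < α :=
        exists_pow_lt_of_lt_one hα0 (by norm_num : (2:ℝ)⁻¹ < 1)
      set m := Nat.find hex with hm
      have hspec : (2:ℝ)⁻¹ ^ m < α := Nat.find_spec hex
      have hm3 : 3 ≤ m := by
        by_contra hc
        push_neg at hc
        have h1 : (2:ℝ)⁻¹^2 ≤ (2:ℝ)⁻¹^m :=
          pow_le_pow_of_le_one (by norm_num) (by norm_num) (by omega)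
        have h2 : ((2:ℝ)⁻¹)^2 = 4⁻¹ := by norm_num
        linarith
      have hmin : α ≤ (2:ℝ)⁻¹ ^ (m - 1) := by
        by_contra hc
        push_neg at hc
        exact Nat.find_min hex (by omega : m - 1 < m) hc
      set K := m - 2 with hK
      have hK1 : K + 1 = m - 1 := by omega
      have hK2 : K + 2 = m := by omega
      have hεK : (2:ℝ)⁻¹^K ≤ 4 * α := by
        have h1 : (2:ℝ)⁻¹^K = 4 * (2:ℝ)⁻¹^(K+2) := by
          rw [pow_succ, pow_succ]
          ring
        rw [h1, hK2]
        linarith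
      have hαε : α ≤ (2:ℝ)⁻¹^(K+1) := by rw [hK1]; exact hmin
      have hε1 : (2:ℝ)⁻¹^(K+1) ≤ 1 := pow_le_one₀ (by norm_num) (by norm_num)
      refine (key K).trans ?_
      have hI1 : IntervalIntegrable (gfun n V) volume α ((2:ℝ)⁻¹^(K+1)) :=
        gfun_intervalIntegrable V hcube hne hα0 (by positivity)
      have hI2 : IntervalIntegrable (gfun n V) volume ((2:ℝ)⁻¹^(K+1)) 1 :=
        gfun_intervalIntegrable V hcube hne (by positivity) (by norm_num)
      have hsplit := intervalIntegral.integral_add_adjacent_intervals hI1 hI2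
      have hnn : 0 ≤ ∫ ρ in α..((2:ℝ)⁻¹^(K+1)), gfun n V ρ :=
        intervalIntegral.integral_nonneg hαε (fun u _ => gfun_nonneg V u)
      have h12 : (∫ ρ in ((2:ℝ)⁻¹^(K+1))..1, gfun n V ρ)
          ≤ ∫ ρ in α..(1:ℝ), gfun n V ρ := by linarith
      have h13 : (0:ℝ) ≤ 12 / Real.sqrt n := by positivity
      have := mul_le_mul_of_nonneg_left h12 h13
      linarith


end RST

namespace RST
open Finset
set_option maxHeartbeats 4000000


section Reduction
variable {Z : Type*} {n : ℕ}

/-- projection of a function class to the sample. -/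
def projS (S : Fin n → Z) : (Z → ℝ) → (Fin n → ℝ) := fun f i => f (S i)

lemma empDist_eq_d2 (S : Fin n → Z) (f g : Z → ℝ) :
    empDistZ S f g = d2 n (projS S f) (projS S g) := rfl

lemma coverSetZ_eq (F : Set (Z → ℝ)) (ρ : ℝ) (S : Fin n → Z) :
    {N : ℕ | ∃ c : Fin N → Z → ℝ, (∀ i, c i ∈ F) ∧
        ∀ f ∈ F, ∃ i, empDistZ S f (c i) ≤ ρ}
      = coverSet n (projS S '' F) ρ := by
  ext N
  constructor
  · rintro ⟨c, hc, hcov⟩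
    refine ⟨fun i => projS S (c i), fun i => ⟨c i, hc i, rfl⟩, ?_⟩
    rintro v ⟨f, hf, rfl⟩
    obtain ⟨i, hi⟩ := hcov f hf
    exact ⟨i, hi⟩
  · rintro ⟨c, hc, hcov⟩
    choose fc hfcF hfceq using hc
    refine ⟨fc, hfcF, ?_⟩
    intro f hf
    obtain ⟨i, hi⟩ := hcov (projS S f) ⟨f, hf, rfl⟩
    refine ⟨i, ?_⟩
    rw [empDist_eq_d2, hfceq i]
    exact hi

end Reduction
end RST

namespace RST
open Finset
set_option maxHeartbeats 4000000

section Reduction2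
variable {Z : Type*} {n : ℕ}


lemma empRad_eq_radV (F : Set (Z → ℝ)) (S : Fin n → Z) :
    empRadZ F S = radV n (projS S '' F) := by
  rw [empRadZ, radV]
  congr 1
  apply Finset.sum_congr rfl
  intro σ _
  congr 1
  rw [Set.image_image]
  rfl

end Reduction2
end RST

namespace RST
set_option maxHeartbeats 4000000

universe u

/-- **Lemma 3 (Dudley entropy-integral bound on the empirical Rademacher average).**
For any class `F` of `[0,1]`-valued functions on `Z` and any sample `S ∈ Zⁿ`,
`R̂_n(F,S) ≤ inf_{α ≥ 0} { 4α + (12/√n) ∫_α^1 √(log N₂(F,ρ,S)) dρ }`. -/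
theorem dudley_entropy_integral_bound :
    ∀ (Z : Type u) (n : ℕ), 1 ≤ n →
      ∀ F : Set (Z → ℝ), (∀ f ∈ F, ∀ z, f z ∈ Set.Icc (0 : ℝ) 1) →
      ∀ S : Fin n → Z, ∀ α : ℝ, 0 ≤ α →
        empRadZ F S ≤ 4 * α +
          12 / Real.sqrt n *
            ∫ ρ in α..(1 : ℝ), Real.sqrt (Real.log ((coveringNumberZ F ρ S : ℝ))) := by
  intro Z n hn F hF S α hα
  have hcube : ∀ v ∈ projS S '' F, ∀ i, v i ∈ Set.Icc (0:ℝ) 1 := by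
    rintro v ⟨f, hf, rfl⟩ i
    exact hF f hf (S i)
  have h1 : empRadZ F S = radV n (projS S '' F) := empRad_eq_radV F S
  have h2 : ∀ ρ : ℝ, coveringNumberZ F ρ S = covV n (projS S '' F) ρ := by
    intro ρ
    rw [coveringNumberZ, covV, coverSetZ_eq F ρ S]
  have h3 : (∫ ρ in α..(1:ℝ), Real.sqrt (Real.log ((coveringNumberZ F ρ S : ℝ))))
      = ∫ ρ in α..(1:ℝ), gfun n (projS S '' F) ρ := by
    have hfe : (fun ρ : ℝ => Real.sqrt (Real.log ((coveringNumberZ F ρ S : ℝ))))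
        = gfun n (projS S '' F) := by
      funext ρ
      rw [gfun, h2 ρ]
    rw [hfe]
  rw [h1, h3]
  exact radV_bound hn (projS S '' F) hcube α hα

end RST
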